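/- For all positive integers s and n with s ≤ n, there exists a tournament T on n vertices whose longest directed cycle has length at most s, such that the maximum size of an acyclic set in T is at most (4n/s)·log₂(2s), and consequently the dichromatic number of T is at least s/(4·log₂(2s)). -/

import Mathlib

/-- A directed cycle of length `n` in the digraph with arc relation `A`:
an injective map `f : ZMod n → V` with an arc from each vertex to the next. -/
def IsDicycle {V : Type*} (A : V → V → Prop) (n : ℕ) (f : ZMod n → V) : Prop :=
  0 < n ∧ Function.Injective f ∧ ∀ i, A (f i) (f (i + 1))

/-- A set of vertices is acyclic if it contains no directed cycle. -/
def AcyclicSet {V : Type*} (A : V → V → Prop) (S : Set V) : Prop :=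
  ∀ (n : ℕ) (f : ZMod n → V), (∀ i, f i ∈ S) → ¬ IsDicycle A n f

/-- The dichromatic number: least `k` such that the vertices can be colored with `k`
colors with every color class acyclic. -/
noncomputable def dichromatic {V : Type*} (A : V → V → Prop) : ℕ :=
  sInf {k | ∃ c : V → Fin k, ∀ i, AcyclicSet A (c ⁻¹' {i})}

/-- The maximum size of an acyclic set of vertices. -/
noncomputable def maxAcyclic {V : Type*} [Fintype V] (A : V → V → Prop) : ℕ :=
  sSup {k | ∃ S : Finset V, AcyclicSet A ↑S ∧ S.card = k}

abbrev Pairs (b : ℕ) := Σ j : Fin b, Fin j.val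

lemma pairs_ext {b : ℕ} {p q : Pairs b} (h1 : p.1 = q.1) (h2 : (p.2 : ℕ) = (q.2 : ℕ)) :
    p = q := by
  obtain ⟨a, i⟩ := p; obtain ⟨a', i'⟩ := q
  simp only at h1; cases h1
  simp_all [Fin.ext_iff]

lemma card_pairs (k : ℕ) : Fintype.card (Pairs k) = k.choose 2 := by
  rw [Fintype.card_sigma]
  have : ∑ j : Fin k, Fintype.card (Fin j.val) = ∑ j ∈ Finset.range k, j := by
    simpa using Fin.sum_univ_eq_sum_range (fun i => i) k
  rw [this, Nat.choose_two_right]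
  have := Finset.sum_range_id_mul_two k
  omega

/-- the arc relation on `Fin b` determined by the bit-vector `g`. -/
def arcOf {b : ℕ} (g : Pairs b → Bool) (u v : Fin b) : Prop :=
  (∃ h : (u : ℕ) < (v : ℕ), g ⟨v, ⟨u, h⟩⟩ = true) ∨
  (∃ h : (v : ℕ) < (u : ℕ), g ⟨u, ⟨v, h⟩⟩ = false)

lemma arcOf_asymm {b : ℕ} (g : Pairs b → Bool) (u v : Fin b) :
    arcOf g u v → ¬ arcOf g v u := by
  rintro (⟨h1, hg1⟩ | ⟨h1, hg1⟩) (⟨h2, hg2⟩ | ⟨h2, hg2⟩) <;>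
    first | omega | (rw [hg1] at hg2; exact Bool.false_ne_true hg2.symm) |
      (rw [hg1] at hg2; exact Bool.false_ne_true hg2)

lemma arcOf_total {b : ℕ} (g : Pairs b → Bool) (u v : Fin b) (h : u ≠ v) :
    arcOf g u v ∨ arcOf g v u := by
  rcases Nat.lt_trichotomy (u : ℕ) (v : ℕ) with hlt | heq | hgt
  · rcases Bool.eq_false_or_eq_true (g ⟨v, ⟨u, hlt⟩⟩) with hg | hg
    · exact Or.inl (Or.inl ⟨hlt, hg⟩)
    · exact Or.inr (Or.inr ⟨hlt, hg⟩)
  · exact absurd (Fin.ext heq) h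
  · rcases Bool.eq_false_or_eq_true (g ⟨u, ⟨v, hgt⟩⟩) with hg | hg
    · exact Or.inr (Or.inl ⟨hgt, hg⟩)
    · exact Or.inl (Or.inr ⟨hgt, hg⟩)

lemma arcOf_true {b : ℕ} {g : Pairs b → Bool} {u v : Fin b} (h : (u : ℕ) < (v : ℕ))
    (ha : arcOf g u v) : g ⟨v, ⟨u, h⟩⟩ = true := by
  rcases ha with ⟨h1, hg1⟩ | ⟨h1, hg1⟩
  · exact hg1
  · omega

lemma arcOf_false {b : ℕ} {g : Pairs b → Bool} {u v : Fin b} (h : (v : ℕ) < (u : ℕ))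
    (ha : arcOf g u v) : g ⟨u, ⟨v, h⟩⟩ = false := by
  rcases ha with ⟨h1, hg1⟩ | ⟨h1, hg1⟩
  · omega
  · exact hg1

section ChainPairs

variable {b k : ℕ}

def iK (q : Pairs k) : Fin k := ⟨q.2.val, lt_trans q.2.isLt q.1.isLt⟩
def jK (q : Pairs k) : Fin k := q.1

lemma iK_lt_jK (q : Pairs k) : iK q < jK q := q.2.isLt

lemma iK_val (q : Pairs k) : (iK q : ℕ) = (q.2 : ℕ) := rfl
lemma jK_eq (q : Pairs k) : jK q = q.1 := rfl

def chainPairs (e : Fin k → Fin b) (he : Function.Injective e) (q : Pairs k) : Pairs b :=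
  if h : (e (iK q) : ℕ) < (e (jK q) : ℕ) then ⟨e (jK q), ⟨(e (iK q) : ℕ), h⟩⟩
  else ⟨e (iK q), ⟨(e (jK q) : ℕ), by
    have hne : e (iK q) ≠ e (jK q) := fun hh => absurd (he hh) (ne_of_lt (iK_lt_jK q))
    have hv : (e (iK q) : ℕ) ≠ (e (jK q) : ℕ) := fun hv => hne (Fin.ext hv)
    omega⟩⟩

lemma chainPairs_inj (e : Fin k → Fin b) (he : Function.Injective e) :
    Function.Injective (chainPairs e he) := by
  intro q1 q2 hq
  unfold chainPairs at hq
  have key : ∀ q : Pairs k, q.1 = jK q ∧ (q.2 : ℕ) = (iK q : ℕ) := fun q => ⟨rfl, rfl⟩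
  split_ifs at hq with h1 h2 h2 <;>
  · have f1 := congrArg Sigma.fst hq
    have f2 := congrArg (fun p : Pairs b => (p.2 : ℕ)) hq
    simp only at f1 f2
    have e1 := he f1
    have e2 := he (Fin.ext f2)
    have l1 := iK_lt_jK q1
    have l2 := iK_lt_jK q2
    rw [Fin.lt_def] at l1 l2
    rw [Fin.ext_iff] at e1 e2
    first
    | omega
    | exact pairs_ext (Fin.ext e1) e2
    | exact pairs_ext (Fin.ext e2) e1

end ChainPairs

lemma card_fixed {ι : Type*} [Fintype ι] [DecidableEq ι] (Q : Finset ι) (v : ι → Bool) :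
    Fintype.card {g : ι → Bool // ∀ p ∈ Q, g p = v p} = 2 ^ (Fintype.card ι - Q.card) := by
  have e : {g : ι → Bool // ∀ p ∈ Q, g p = v p} ≃ ((Qᶜ : Finset ι) → Bool) := by
    refine ⟨fun g i => g.1 i.1, fun h => ⟨fun i => if hi : i ∈ Q then v i else
      h ⟨i, Finset.mem_compl.mpr hi⟩, fun p hp => by simp [hp]⟩, ?_, ?_⟩
    · rintro ⟨g, hg⟩
      ext i
      by_cases hi : i ∈ Q
      · simp [hi, (hg i hi).symm]
      · simp [hi]
    · intro h
      ext ⟨i, hi⟩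
      have : i ∉ Q := Finset.mem_compl.mp hi
      simp [this]
  rw [Fintype.card_congr e, Fintype.card_fun]
  simp [Finset.card_compl]

open Classical in
noncomputable def vfun {b k : ℕ} (e : Fin k → Fin b) (p : Pairs b) : Bool :=
  decide (∃ i j : Fin k, i < j ∧ (e i : ℕ) = (p.2 : ℕ) ∧ e j = p.1)

lemma chain_fix {b k : ℕ} {e : Fin k → Fin b} (he : Function.Injective e)
    {g : Pairs b → Bool} (hchain : ∀ i j : Fin k, i < j → arcOf g (e i) (e j)) (q : Pairs k) :
    g (chainPairs e he q) = vfun e (chainPairs e he q) := by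
  classical
  unfold chainPairs
  split_ifs with h
  · have hg := arcOf_true h (hchain _ _ (iK_lt_jK q))
    rw [hg, vfun, eq_comm, decide_eq_true_eq]
    exact ⟨iK q, jK q, iK_lt_jK q, rfl, rfl⟩
  · have hne : e (iK q) ≠ e (jK q) := fun hh => absurd (he hh) (ne_of_lt (iK_lt_jK q))
    have hv : (e (iK q) : ℕ) ≠ (e (jK q) : ℕ) := fun hv => hne (Fin.ext hv)
    have h' : (e (jK q) : ℕ) < (e (iK q) : ℕ) := by omega
    have hg := arcOf_false h' (hchain _ _ (iK_lt_jK q))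
    rw [hg, vfun, eq_comm, decide_eq_false_iff_not]
    rintro ⟨i, j, hij, hiv, hj⟩
    have hi : i = jK q := he (Fin.ext hiv)
    have hj' : j = iK q := he hj
    have := iK_lt_jK q
    rw [hi, hj'] at hij
    exact absurd (lt_trans hij this) (lt_irrefl _)

lemma exists_good (b k : ℕ) (hbk : b ^ k < 2 ^ (k.choose 2)) :
    ∃ G : Fin b → Fin b → Prop,
      (∀ u v, G u v → ¬ G v u) ∧ (∀ u v, u ≠ v → G u v ∨ G v u) ∧
      ¬ ∃ e : Fin k → Fin b, Function.Injective e ∧ ∀ i j : Fin k, i < j → G (e i) (e j) := by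
  classical
  by_cases hkb : b < k
  · refine ⟨fun u v => u < v, fun u v h1 h2 => absurd (lt_trans h1 h2) (lt_irrefl _),
      fun u v h => h.lt_or_gt, ?_⟩
    rintro ⟨e, he, -⟩
    have := Fintype.card_le_of_injective e he
    simp only [Fintype.card_fin] at this
    omega
  push_neg at hkb
  have hcC : k.choose 2 ≤ Fintype.card (Pairs b) := by
    rw [card_pairs]; exact Nat.choose_le_choose 2 hkb
  let chain : (Fin k → Fin b) → (Pairs b → Bool) → Prop := fun e g =>
    Function.Injective e ∧ ∀ i j : Fin k, i < j → arcOf g (e i) (e j)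
  let bad : Finset (Pairs b → Bool) := Finset.univ.filter (fun g => ∃ e, chain e g)
  have hsub : bad ⊆ Finset.univ.biUnion (fun e : Fin k → Fin b =>
      Finset.univ.filter (fun g => chain e g)) := by
    intro g hg
    rw [Finset.mem_filter] at hg
    obtain ⟨e, hce⟩ := hg.2
    exact Finset.mem_biUnion.mpr
      ⟨e, Finset.mem_univ _, Finset.mem_filter.mpr ⟨Finset.mem_univ _, hce⟩⟩
  have hper : ∀ e : Fin k → Fin b, (Finset.univ.filter (fun g => chain e g)).card ≤
      2 ^ (Fintype.card (Pairs b) - k.choose 2) := by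
    intro e
    by_cases he : Function.Injective e
    · have hQcard : (Finset.univ.image (chainPairs e he)).card = k.choose 2 := by
        rw [Finset.card_image_of_injective _ (chainPairs_inj e he), Finset.card_univ, card_pairs]
      have hsub2 : Finset.univ.filter (fun g => chain e g) ⊆
          Finset.univ.filter
            (fun g => ∀ p ∈ Finset.univ.image (chainPairs e he), g p = vfun e p) := by
        intro g hg
        rw [Finset.mem_filter] at hg ⊢
        refine ⟨Finset.mem_univ _, fun p hp => ?_⟩
        rw [Finset.mem_image] at hp
        obtain ⟨q, -, rfl⟩ := hp
        exact chain_fix he hg.2.2 q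
      calc (Finset.univ.filter (fun g => chain e g)).card
          ≤ _ := Finset.card_le_card hsub2
        _ = 2 ^ (Fintype.card (Pairs b) - k.choose 2) := by
            rw [← Fintype.card_subtype, card_fixed, hQcard]
    · have hempty : Finset.univ.filter (fun g => chain e g) = ∅ := by
        rw [Finset.filter_eq_empty_iff]
        exact fun {g} _ hcg => he hcg.1
      simp [hempty]
  have hcard : bad.card ≤ b ^ k * 2 ^ (Fintype.card (Pairs b) - k.choose 2) := by
    calc bad.card ≤ _ := Finset.card_le_card hsub
      _ ≤ ∑ e : Fin k → Fin b, (Finset.univ.filter (fun g => chain e g)).card :=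
          Finset.card_biUnion_le
      _ ≤ ∑ _e : Fin k → Fin b, 2 ^ (Fintype.card (Pairs b) - k.choose 2) :=
          Finset.sum_le_sum (fun e _ => hper e)
      _ = b ^ k * 2 ^ (Fintype.card (Pairs b) - k.choose 2) := by
          rw [Finset.sum_const, Finset.card_univ, Fintype.card_fun, Fintype.card_fin, Fintype.card_fin,
            smul_eq_mul]
  have hlt : bad.card < Fintype.card (Pairs b → Bool) := by
    rw [Fintype.card_fun, Fintype.card_bool]
    calc bad.card ≤ b ^ k * 2 ^ (Fintype.card (Pairs b) - k.choose 2) := hcard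
      _ < 2 ^ (k.choose 2) * 2 ^ (Fintype.card (Pairs b) - k.choose 2) := by
          have h2 : 0 < 2 ^ (Fintype.card (Pairs b) - k.choose 2) := by positivity
          exact (Nat.mul_lt_mul_right h2).mpr hbk
      _ = 2 ^ (Fintype.card (Pairs b)) := by rw [← pow_add]; congr 1; omega
  have hex : ∃ g, g ∉ bad := by
    by_contra hall
    push_neg at hall
    have h1 : (Finset.univ : Finset (Pairs b → Bool)) ⊆ bad := fun g _ => hall g
    have h2 := Finset.card_le_card h1
    rw [Finset.card_univ] at h2
    omega
  obtain ⟨g, hg⟩ := hex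
  refine ⟨arcOf g, arcOf_asymm g, arcOf_total g, ?_⟩
  rintro ⟨e, he, hchain⟩
  exact hg (Finset.mem_filter.mpr ⟨Finset.mem_univ _, e, he, hchain⟩)

lemma irrefl_of_asymm {V : Type*} {G : V → V → Prop} (hasym : ∀ u v, G u v → ¬ G v u)
    (x : V) : ¬ G x x := fun hx => hasym x x hx hx

lemma three_cycle {V : Type*} {G : V → V → Prop} {a b c : V}
    (hasym : ∀ u v, G u v → ¬ G v u)
    (hab : G a b) (hbc : G b c) (hca : G c a)
    {S : Set V} (ha : a ∈ S) (hb : b ∈ S) (hc : c ∈ S) (hS : AcyclicSet G S) : False := by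
  have hab' : a ≠ b := fun h => irrefl_of_asymm hasym a (h ▸ hab)
  have hbc' : b ≠ c := fun h => irrefl_of_asymm hasym b (h ▸ hbc)
  have hca' : c ≠ a := fun h => irrefl_of_asymm hasym c (h ▸ hca)
  set f : ZMod 3 → V := fun i => if i = 0 then a else if i = 1 then b else c with hf
  have hcases : ∀ i : ZMod 3, i = 0 ∨ i = 1 ∨ i = 2 := by decide
  have z10 : (1:ZMod 3) ≠ 0 := by decide
  have z20 : (2:ZMod 3) ≠ 0 := by decide
  have z21 : (2:ZMod 3) ≠ 1 := by decide
  have a01 : (0:ZMod 3) + 1 = 1 := by decide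
  have a12 : (1:ZMod 3) + 1 = 2 := by decide
  have a20 : (2:ZMod 3) + 1 = 0 := by decide
  apply hS 3 f
  · intro i
    rcases hcases i with rfl | rfl | rfl <;> simp [hf, ha, hb, hc, z10, z20, z21]
  refine ⟨by norm_num, ?_, ?_⟩
  · intro i j hij
    rcases hcases i with rfl | rfl | rfl <;> rcases hcases j with rfl | rfl | rfl <;>
      first
      | rfl
      | (exfalso; revert hij; simp [hf, z10, z20, z21]; tauto)
  · intro i
    rcases hcases i with rfl | rfl | rfl
    · rw [a01]; simpa [hf, z10, z20, z21] using hab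
    · rw [a12]; simpa [hf, z10, z20, z21] using hbc
    · rw [a20]; simpa [hf, z10, z20, z21] using hca

lemma trans_of_acyclic {V : Type*} {G : V → V → Prop}
    (hasym : ∀ u v, G u v → ¬ G v u) (htot : ∀ u v, u ≠ v → G u v ∨ G v u)
    {S : Set V} (hS : AcyclicSet G S) :
    ∀ a ∈ S, ∀ b ∈ S, ∀ c ∈ S, G a b → G b c → G a c := by
  intro a ha b hb c hc hab hbc
  have hac : a ≠ c := by
    rintro rfl
    exact hasym a b hab hbc
  rcases htot a c hac with h | h
  · exact h
  · exact absurd (three_cycle hasym hab hbc h ha hb hc hS) not_false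

lemma exists_chain_of_acyclic {V : Type*} [DecidableEq V] {G : V → V → Prop}
    (hasym : ∀ u v, G u v → ¬ G v u) (htot : ∀ u v, u ≠ v → G u v ∨ G v u) :
    ∀ (m : ℕ) (S : Finset V), S.card = m → AcyclicSet G ↑S →
      ∃ e : Fin m → V, Function.Injective e ∧ (∀ i, e i ∈ S) ∧
        ∀ i j : Fin m, i < j → G (e i) (e j) := by
  classical
  intro m
  induction m with
  | zero =>
    intro S _ _
    exact ⟨Fin.elim0, fun i => i.elim0, fun i => i.elim0, fun i => i.elim0⟩
  | succ m ih =>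
    intro S hcard hS
    have hne : S.Nonempty := Finset.card_pos.mp (by omega)
    -- find a source w : beats everyone else in S
    obtain ⟨w, hwS, hwmax⟩ := Finset.exists_max_image S (fun v => (S.filter (fun x => G v x)).card) hne
    have hsource : ∀ x ∈ S, x ≠ w → G w x := by
      intro x hxS hxw
      by_contra hGwx
      have hGxw : G x w := (htot w x (Ne.symm hxw)).resolve_left hGwx
      have hsub : insert w (S.filter (fun y => G w y)) ⊆ S.filter (fun y => G x y) := by
        intro y hy
        rcases Finset.mem_insert.mp hy with rfl | hy'
        · exact Finset.mem_filter.mpr ⟨hwS, hGxw⟩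
        · rw [Finset.mem_filter] at hy'
          obtain ⟨hyS, hGwy⟩ := hy'
          have hyx : y ≠ x := by rintro rfl; exact hGwx hGwy
          refine Finset.mem_filter.mpr ⟨hyS, ?_⟩
          rcases htot x y (Ne.symm hyx) with h | h
          · exact h
          · exact absurd (trans_of_acyclic hasym htot hS w hwS y hyS x hxS hGwy h)
              (fun hwx => hasym x w hGxw hwx)
      have hwnot : w ∉ S.filter (fun y => G w y) := by
        simp [irrefl_of_asymm hasym w]
      have hcards := Finset.card_le_card hsub
      rw [Finset.card_insert_of_notMem hwnot] at hcards
      have := hwmax x hxS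
      omega
    -- induct on S.erase w
    have hcard' : (S.erase w).card = m := by
      rw [Finset.card_erase_of_mem hwS]; omega
    have hS' : AcyclicSet G ↑(S.erase w) := by
      intro n f hf
      exact hS n f (fun i => Finset.mem_coe.mpr (Finset.mem_of_mem_erase (hf i)))
    obtain ⟨e', he'inj, he'mem, he'chain⟩ := ih (S.erase w) hcard' hS'
    refine ⟨Fin.cases w e', ?_, ?_, ?_⟩
    · intro i j hij
      induction i using Fin.cases with
      | zero =>
        induction j using Fin.cases with
        | zero => rfl
        | succ j' =>
          exfalso
          simp only [Fin.cases_zero, Fin.cases_succ] at hij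
          exact Finset.ne_of_mem_erase (he'mem j') hij.symm
      | succ i' =>
        induction j using Fin.cases with
        | zero =>
          exfalso
          simp only [Fin.cases_zero, Fin.cases_succ] at hij
          exact Finset.ne_of_mem_erase (he'mem i') hij
        | succ j' =>
          simp only [Fin.cases_succ] at hij
          rw [he'inj hij]
    · intro i
      induction i using Fin.cases with
      | zero => simpa using hwS
      | succ i' => simpa using Finset.mem_of_mem_erase (he'mem i')
    · intro i j hij
      induction j using Fin.cases with
      | zero => exact absurd hij (Nat.not_lt_zero _)
      | succ j' =>
        induction i using Fin.cases with
        | zero =>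
          simp only [Fin.cases_zero, Fin.cases_succ]
          exact hsource _ (Finset.mem_of_mem_erase (he'mem j'))
            (Finset.ne_of_mem_erase (he'mem j'))
        | succ i' =>
          simp only [Fin.cases_succ]
          exact he'chain i' j' (by
            rw [Fin.lt_def] at hij ⊢
            simpa using hij)

lemma acyclic_card_lt {V : Type*} [DecidableEq V] {G : V → V → Prop} {k : ℕ}
    (hasym : ∀ u v, G u v → ¬ G v u) (htot : ∀ u v, u ≠ v → G u v ∨ G v u)
    (hnochain : ¬ ∃ e : Fin k → V, Function.Injective e ∧
      ∀ i j : Fin k, i < j → G (e i) (e j))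
    (S : Finset V) (hS : AcyclicSet G ↑S) : S.card < k := by
  by_contra hle
  push_neg at hle
  obtain ⟨t, hts, htcard⟩ := Finset.exists_subset_card_eq hle
  have htS : AcyclicSet G ↑t := fun n f hf =>
    hS n f (fun i => Finset.mem_coe.mpr (hts (hf i)))
  obtain ⟨e, heinj, -, hechain⟩ := exists_chain_of_acyclic hasym htot k t htcard htS
  exact hnochain ⟨e, heinj, hechain⟩


/-- For all positive integers `s ≤ n` there is an `n`-vertex tournament whose
directed cycles all have length at most `s`, with `α⃗(T) ≤ (4n/s)·log₂(2s)` and hence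
`χ⃗(T) ≥ s/(4·log₂(2s))`. -/
theorem stmt5 (s n : ℕ) (hs : 0 < s) (hsn : s ≤ n) :
    ∃ A : Fin n → Fin n → Prop,
      (∀ u v, A u v → ¬ A v u) ∧
      (∀ u v : Fin n, u ≠ v → A u v ∨ A v u) ∧
      (∀ (m : ℕ) (f : ZMod m → Fin n), IsDicycle A m f → m ≤ s) ∧
      (maxAcyclic A : ℝ) ≤ 4 * n / s * Real.logb 2 (2 * s) ∧
      (s : ℝ) / (4 * Real.logb 2 (2 * s)) ≤ (dichromatic A : ℝ) := by
  classical
  set L := Nat.log 2 s with hL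
  set K := 2 * L + 3 with hK
  have h2L : 2 ^ L ≤ s := Nat.pow_log_le_self 2 hs.ne'
  have hsK : s ^ K < 2 ^ (K.choose 2) := by
    have h1 : s < 2 ^ (L + 1) := Nat.lt_pow_succ_log_self (by norm_num) s
    have h2 : s ^ K < (2 ^ (L + 1)) ^ K := Nat.pow_lt_pow_left h1 (by omega)
    have h3 : (2 ^ (L + 1)) ^ K = 2 ^ ((L + 1) * K) := by rw [← pow_mul]
    have h4 : K.choose 2 = (L + 1) * K := by
      rw [Nat.choose_two_right]
      have e1 : K - 1 = 2 * L + 2 := by omega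
      rw [e1]
      have e2 : K * (2 * L + 2) = ((L + 1) * K) * 2 := by ring
      rw [e2, Nat.mul_div_cancel _ (by norm_num)]
    rw [h4, ← h3]
    exact h2
  obtain ⟨G, hGasym, hGtot, hGnochain⟩ := exists_good s K hsK
  set res : Fin n → Fin s := fun v => ⟨v.val % s, Nat.mod_lt _ hs⟩ with hres
  set A : Fin n → Fin n → Prop := fun u v =>
    u.val / s < v.val / s ∨ (u.val / s = v.val / s ∧ G (res u) (res v)) with hA
  have hval : ∀ u v : Fin n, u.val / s = v.val / s → res u = res v → u = v := by
    intro u v h1 h2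
    have h2' : u.val % s = v.val % s := congrArg Fin.val h2
    have e1 := Nat.mod_add_div u.val s
    have e2 := Nat.mod_add_div v.val s
    have : s * (u.val / s) = s * (v.val / s) := by rw [h1]
    exact Fin.ext (by omega)
  have hAasym : ∀ u v, A u v → ¬ A v u := by
    rintro u v (h | ⟨h1, h2⟩) (h' | ⟨h1', h2'⟩) <;>
      first | omega | exact hGasym _ _ h2 h2'
  have hAtot : ∀ u v : Fin n, u ≠ v → A u v ∨ A v u := by
    intro u v huv
    rcases Nat.lt_trichotomy (u.val / s) (v.val / s) with h | h | h
    · exact Or.inl (Or.inl h)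
    · have hresne : res u ≠ res v := fun hr => huv (hval u v h hr)
      rcases hGtot _ _ hresne with hg | hg
      · exact Or.inl (Or.inr ⟨h, hg⟩)
      · exact Or.inr (Or.inr ⟨h.symm, hg⟩)
    · exact Or.inr (Or.inl h)
  have hcyc : ∀ (m : ℕ) (f : ZMod m → Fin n), IsDicycle A m f → m ≤ s := by
    rintro m f ⟨hm, hinj, harc⟩
    haveI : NeZero m := ⟨hm.ne'⟩
    have hstep : ∀ i : ZMod m, (f i).val / s ≤ (f (i + 1)).val / s := by
      intro i
      rcases harc i with h | ⟨h1, -⟩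
      · omega
      · omega
    have hmono : ∀ (i : ZMod m) (t : ℕ), (f i).val / s ≤ (f (i + t)).val / s := by
      intro i t
      induction t with
      | zero => simp
      | succ t iht =>
        have e : (i + ((t + 1 : ℕ) : ZMod m)) = (i + t) + 1 := by push_cast; ring
        rw [e]
        exact le_trans iht (hstep _)
    have hall : ∀ i j : ZMod m, (f i).val / s ≤ (f j).val / s := by
      intro i j
      have h := hmono i ((j - i).val)
      rwa [show (((j - i).val : ℕ) : ZMod m) = j - i from ZMod.natCast_rightInverse _,
        show i + (j - i) = j from by ring] at h
    have hinj2 : Function.Injective (fun i : ZMod m => res (f i)) := by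
      intro i j hij
      have hb : (f i).val / s = (f j).val / s := le_antisymm (hall i j) (hall j i)
      exact hinj (hval _ _ hb hij)
    calc m = Fintype.card (ZMod m) := (ZMod.card m).symm
      _ ≤ Fintype.card (Fin s) := Fintype.card_le_of_injective _ hinj2
      _ = s := Fintype.card_fin s
  set B := (n - 1) / s + 1 with hB
  have hfiber : ∀ S : Finset (Fin n), AcyclicSet A ↑S → S.card ≤ B * (2 * L + 2) := by
    intro S hSA
    have hmem : ∀ v ∈ S, v.val / s ∈ Finset.range B := by
      intro v hv
      rw [Finset.mem_range]
      have h1 : v.val ≤ n - 1 := by have := v.isLt; omega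
      exact lt_of_le_of_lt (Nat.div_le_div_right h1) (Nat.lt_succ_self _)
    rw [Finset.card_eq_sum_card_fiberwise hmem]
    have hbound : ∀ t ∈ Finset.range B,
        (S.filter (fun v => v.val / s = t)).card ≤ 2 * L + 2 := by
      intro t _
      set F := S.filter (fun v => v.val / s = t) with hF
      have hblk : ∀ v ∈ F, v.val / s = t := by
        intro v hv
        exact (Finset.mem_filter.mp hv).2
      have hresinj : Set.InjOn res ↑F := by
        intro u hu v hv huv
        exact hval u v ((hblk u hu).trans (hblk v hv).symm) huv
      have himage : AcyclicSet G ↑(F.image res) := by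
        rintro m f hf ⟨hm, hinj, harc⟩
        choose φ hφ1 hφ2 using fun i => Finset.mem_image.mp (Finset.mem_coe.mp (hf i))
        apply hSA m φ
        · intro i
          exact Finset.mem_coe.mpr (Finset.mem_filter.mp (hφ1 i)).1
        refine ⟨hm, ?_, ?_⟩
        · intro i j hij
          apply hinj
          rw [← hφ2 i, ← hφ2 j, hij]
        · intro i
          refine Or.inr ⟨?_, ?_⟩
          · rw [hblk _ (hφ1 i), hblk _ (hφ1 (i + 1))]
          · rw [hφ2 i, hφ2 (i + 1)]
            exact harc i
      have hcard1 : (F.image res).card = F.card := Finset.card_image_of_injOn hresinj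
      have hlt := acyclic_card_lt hGasym hGtot hGnochain (F.image res) himage
      omega
    calc ∑ t ∈ Finset.range B, (S.filter (fun v => v.val / s = t)).card
        ≤ (Finset.range B).card • (2 * L + 2) := Finset.sum_le_card_nsmul _ _ _ hbound
      _ = B * (2 * L + 2) := by rw [Finset.card_range, smul_eq_mul]
  have hmaxset : maxAcyclic A ≤ B * (2 * L + 2) := by
    apply csSup_le
    · exact ⟨0, ∅, fun m f hf hd => absurd (hf 0) (by simp), Finset.card_empty⟩
    · rintro x ⟨S, hSA, rfl⟩
      exact hfiber S hSA
  have hn0 : 0 < n := lt_of_lt_of_le hs hsn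
  have hs0R : (0:ℝ) < s := by exact_mod_cast hs
  have hn0R : (0:ℝ) < n := by exact_mod_cast hn0
  have hlogpos : 0 < Real.logb 2 (2 * s) := by
    apply Real.logb_pos (by norm_num)
    have : (1:ℝ) ≤ s := by exact_mod_cast hs
    linarith
  have hL1 : (L : ℝ) + 1 ≤ Real.logb 2 (2 * s) := by
    have h1 : (2:ℝ) ^ (L + 1) ≤ 2 * s := by
      have h2 : ((2:ℝ)) ^ L ≤ s := by exact_mod_cast h2L
      rw [pow_succ]
      nlinarith
    calc (L : ℝ) + 1 = Real.logb 2 ((2:ℝ) ^ (L + 1)) := by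
          rw [Real.logb_pow, Real.logb_self_eq_one (by norm_num)]
          push_cast; ring
      _ ≤ Real.logb 2 (2 * s) := Real.logb_le_logb_of_le (by norm_num) (by positivity) h1
  have hreal : (maxAcyclic A : ℝ) ≤ 4 * n / s * Real.logb 2 (2 * s) := by
    have h1 : (maxAcyclic A : ℝ) ≤ (B : ℝ) * (2 * L + 2) := by
      have := hmaxset
      exact_mod_cast Nat.cast_le.mpr this
    have hBle : (B : ℝ) ≤ 2 * n / s := by
      have h2 : ((((n - 1) / s : ℕ)) : ℝ) ≤ ((n - 1 : ℕ) : ℝ) / s := Nat.cast_div_le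
      have h3 : ((n - 1 : ℕ) : ℝ) ≤ n := by
        have : (n - 1 : ℕ) ≤ n := Nat.sub_le n 1
        exact_mod_cast this
      have h4 : ((n - 1 : ℕ) : ℝ) / s ≤ (n : ℝ) / s := by gcongr
      have h5 : (1:ℝ) ≤ (n : ℝ) / s := by
        rw [le_div_iff₀ hs0R]
        have : (s:ℝ) ≤ n := by exact_mod_cast hsn
        linarith
      have hBR : (B : ℝ) = (((n - 1) / s : ℕ) : ℝ) + 1 := by rw [hB]; push_cast; ring
      rw [hBR]
      have := le_trans h2 h4
      rw [show (2:ℝ) * n / s = n / s + n / s from by ring]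
      linarith
    have hLle : 2 * (L:ℝ) + 2 ≤ 2 * Real.logb 2 (2 * s) := by nlinarith [hL1]
    calc (maxAcyclic A : ℝ) ≤ (B : ℝ) * (2 * L + 2) := h1
      _ ≤ (2 * n / s) * (2 * Real.logb 2 (2 * s)) := by
          apply mul_le_mul hBle hLle (by positivity) (by positivity)
      _ = 4 * n / s * Real.logb 2 (2 * s) := by ring
  have hDne : {k | ∃ c : Fin n → Fin k, ∀ i, AcyclicSet A (c ⁻¹' {i})}.Nonempty := by
    refine ⟨n, fun v => v, fun i m f hf hd => ?_⟩
    obtain ⟨hm, hinj, harc⟩ := hd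
    have hall : ∀ x, f x = i := fun x => hf x
    have h01 : A i i := by have h := harc 0; rwa [hall, hall] at h
    exact hAasym i i h01 h01
  have hmem : ∃ c : Fin n → Fin (dichromatic A), ∀ i, AcyclicSet A (c ⁻¹' {i}) :=
    Nat.sInf_mem hDne
  obtain ⟨c, hc⟩ := hmem
  have hbdd : BddAbove {k | ∃ S : Finset (Fin n), AcyclicSet A ↑S ∧ S.card = k} := by
    refine ⟨n, ?_⟩
    rintro x ⟨S, -, rfl⟩
    exact le_trans (Finset.card_le_univ S) (by simp)
  have hclass : ∀ i : Fin (dichromatic A),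
      (Finset.univ.filter (fun v => c v = i)).card ≤ maxAcyclic A := by
    intro i
    apply le_csSup hbdd
    refine ⟨_, ?_, rfl⟩
    have hset : ↑(Finset.univ.filter (fun v => c v = i)) = c ⁻¹' {i} := by
      ext v; simp
    rw [hset]
    exact hc i
  have hcolor : n ≤ dichromatic A * maxAcyclic A := by
    calc n = Fintype.card (Fin n) := (Fintype.card_fin n).symm
      _ = (Finset.univ : Finset (Fin n)).card := Finset.card_univ.symm
      _ = ∑ i : Fin (dichromatic A), (Finset.univ.filter (fun v => c v = i)).card :=
          Finset.card_eq_sum_card_fiberwise (fun v _ => Finset.mem_univ _)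
      _ ≤ ∑ _i : Fin (dichromatic A), maxAcyclic A :=
          Finset.sum_le_sum (fun i _ => hclass i)
      _ = dichromatic A * maxAcyclic A := by
          rw [Finset.sum_const, Finset.card_univ, Fintype.card_fin, smul_eq_mul]
  refine ⟨A, hAasym, hAtot, hcyc, hreal, ?_⟩
  have hnR : (n:ℝ) ≤ (dichromatic A : ℝ) * (maxAcyclic A : ℝ) := by exact_mod_cast hcolor
  have hd0 : (0:ℝ) ≤ (dichromatic A : ℝ) := Nat.cast_nonneg _
  have h5 : (n:ℝ) ≤ (dichromatic A : ℝ) * (4 * n / s * Real.logb 2 (2 * s)) := by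
    calc (n:ℝ) ≤ (dichromatic A : ℝ) * (maxAcyclic A : ℝ) := hnR
      _ ≤ (dichromatic A : ℝ) * (4 * n / s * Real.logb 2 (2 * s)) := by
          apply mul_le_mul_of_nonneg_left hreal hd0
  rw [div_le_iff₀ (by positivity)]
  have h6 : (n:ℝ) * s ≤ (dichromatic A : ℝ) * (4 * Real.logb 2 (2 * s)) * n := by
    have := mul_le_mul_of_nonneg_right h5 (le_of_lt hs0R)
    calc (n:ℝ) * s ≤ (dichromatic A : ℝ) * (4 * n / s * Real.logb 2 (2 * s)) * s := this
      _ = (dichromatic A : ℝ) * (4 * Real.logb 2 (2 * s)) * n := by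
          field_simp
  nlinarith [h6, hn0R]
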